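/- Let t₀ ∈ {0, π}, m ≥ 2, and let λ₀ ∈ ℂ be an eigenvalue of L_{t₀} of multiplicity m, i.e. F(λ₀) = 2cos t₀, F^{(j)}(λ₀) = 0 for 1 ≤ j ≤ m−1, and F^{(m)}(λ₀) ≠ 0. Let λ_k : I → ℂ be continuous on an open real interval I containing t₀, with λ_k(t₀) = λ₀ and F(λ_k(t)) = 2cos t for all t ∈ I. Then there exist δ, c₁, c₂ > 0 such that c₁|t − t₀|^{2/m} ≤ |λ_k(t) − λ₀| ≤ c₂|t − t₀|^{2/m} for all t ∈ I with 0 < |t − t₀| ≤ δ; moreover, after shrinking δ, F'(λ_k(t)) ≠ 0 for 0 < |t − t₀| ≤ δ (so λ_k(t) is a simple eigenvalue of L_t). -/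

import Mathlib

open MeasureTheory Set
open scoped Real Classical

noncomputable section

/-- `y` (with first derivative `yd`) solves the Hill equation `-y'' + q y = λ y` on `[0,1]`
in the Carathéodory sense: `y` and `y'` are absolutely continuous and the equation holds
almost everywhere, expressed via the equivalent integral equations. -/
structure IsHillSolution (q : ℝ → ℂ) (lam : ℂ) (y yd : ℝ → ℂ) : Prop where
  int_yd : IntervalIntegrable yd volume 0 1
  int_rhs : IntervalIntegrable (fun s => q s * y s - lam * y s) volume 0 1
  y_eq : ∀ x ∈ Icc (0:ℝ) 1, y x = y 0 + ∫ s in (0:ℝ)..x, yd s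
  yd_eq : ∀ x ∈ Icc (0:ℝ) 1, yd x = yd 0 + ∫ s in (0:ℝ)..x, (q s * y s - lam * y s)

/-- The standard context for the Hill operator: a `1`-periodic integrable potential `q`
together with the fundamental solutions `θ`, `φ` (with `x`-derivatives `θd`, `φd`)
of `-y'' + q y = λ y` normalized at `x = 0`, jointly continuous in `(x, λ)`,
entire in `λ` for fixed `x`, and satisfying the Wronskian identity. -/
structure HillContext where
  q : ℝ → ℂ
  int_q : IntervalIntegrable q volume 0 1
  periodic_q : ∀ x, q (x + 1) = q x
  θ : ℝ → ℂ → ℂ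
  θd : ℝ → ℂ → ℂ
  φ : ℝ → ℂ → ℂ
  φd : ℝ → ℂ → ℂ
  sol_θ : ∀ lam, IsHillSolution q lam (fun x => θ x lam) (fun x => θd x lam)
  sol_φ : ∀ lam, IsHillSolution q lam (fun x => φ x lam) (fun x => φd x lam)
  θ_init : ∀ lam, θ 0 lam = 1
  θd_init : ∀ lam, θd 0 lam = 0
  φ_init : ∀ lam, φ 0 lam = 0
  φd_init : ∀ lam, φd 0 lam = 1
  θ_cont : Continuous fun p : ℝ × ℂ => θ p.1 p.2
  θd_cont : Continuous fun p : ℝ × ℂ => θd p.1 p.2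
  φ_cont : Continuous fun p : ℝ × ℂ => φ p.1 p.2
  φd_cont : Continuous fun p : ℝ × ℂ => φd p.1 p.2
  θ_entire : ∀ x, Differentiable ℂ (θ x)
  θd_entire : ∀ x, Differentiable ℂ (θd x)
  φ_entire : ∀ x, Differentiable ℂ (φ x)
  φd_entire : ∀ x, Differentiable ℂ (φd x)
  wronskian : ∀ x lam, θ x lam * φd x lam - θd x lam * φ x lam = 1

namespace HillContext

variable (H : HillContext)

/-- The Hill discriminant `F(λ) = θ(1,λ) + φ'(1,λ)`. -/
def F (lam : ℂ) : ℂ := H.θ 1 lam + H.φd 1 lam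

/-- `Φ_t(x,λ) = φ(1,λ)θ(x,λ) + (e^{it} - θ(1,λ))φ(x,λ)`. -/
def Phi (t : ℝ) (x : ℝ) (lam : ℂ) : ℂ :=
  H.φ 1 lam * H.θ x lam + (Complex.exp (Complex.I * t) - H.θ 1 lam) * H.φ x lam

/-- `G_t(x,λ) = θ'(1,λ)φ(x,λ) + (e^{it} - φ'(1,λ))θ(x,λ)`. -/
def G (t : ℝ) (x : ℝ) (lam : ℂ) : ℂ :=
  H.θd 1 lam * H.φ x lam + (Complex.exp (Complex.I * t) - H.φd 1 lam) * H.θ x lam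

end HillContext

/-- The `L²(0,1)` norm of a function. -/
def l2norm (f : ℝ → ℂ) : ℝ := Real.sqrt (∫ x in (0:ℝ)..1, ‖f x‖ ^ 2)

namespace HillContext

variable (H : HillContext)

/-- The normalized eigenfunction `Ψ_{n,t}` along the branch `lamn`. -/
def Psi (lamn : ℝ → ℂ) (t : ℝ) (x : ℝ) : ℂ :=
  if l2norm (fun s => H.Phi t s (lamn t)) ≠ 0 then
    H.Phi t x (lamn t) / (l2norm (fun s => H.Phi t s (lamn t)) : ℂ)
  else
    H.G t x (lamn t) / (l2norm (fun s => H.G t s (lamn t)) : ℂ)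

/-- The normalized adjoint eigenfunction `Ψ*_{n,t}` along the branch `lamn`. -/
def PsiStar (lamn : ℝ → ℂ) (t : ℝ) (x : ℝ) : ℂ :=
  if l2norm (fun s => H.Phi (-t) s (lamn t)) ≠ 0 then
    (starRingEnd ℂ) (H.Phi (-t) x (lamn t)) / (l2norm (fun s => H.Phi (-t) s (lamn t)) : ℂ)
  else
    (starRingEnd ℂ) (H.G (-t) x (lamn t)) / (l2norm (fun s => H.G (-t) s (lamn t)) : ℂ)

/-- `α_n(t) = ∫₀¹ Ψ_{n,t}(x) conj(Ψ*_{n,t}(x)) dx`. -/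
def alpha (lamn : ℝ → ℂ) (t : ℝ) : ℂ :=
  ∫ x in (0:ℝ)..1, H.Psi lamn t x * (starRingEnd ℂ) (H.PsiStar lamn t x)

end HillContext

open Filter Topology

private lemma hillAux_itd_zero (n : ℕ) (x : ℂ) :
    iteratedDeriv n (fun _ : ℂ => (0:ℂ)) x = 0 := by
  induction n generalizing x with
  | zero => simp [iteratedDeriv_zero]
  | succ n ih =>
    rw [iteratedDeriv_succ', show deriv (fun _ : ℂ => (0:ℂ)) = fun _ : ℂ => (0:ℂ) from
      funext fun _ => deriv_const _ _]
    exact ih x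

private lemma hillAux_factor {g : ℂ → ℂ} {z₀ : ℂ} (hg : AnalyticAt ℂ g z₀) {m : ℕ}
    (h0 : ∀ j : ℕ, j < m → iteratedDeriv j g z₀ = 0)
    (hm : iteratedDeriv m g z₀ ≠ 0) :
    ∃ h : ℂ → ℂ, AnalyticAt ℂ h z₀ ∧ h z₀ ≠ 0 ∧
      ∀ᶠ z in 𝓝 z₀, g z = (z - z₀) ^ m * h z := by
  obtain ⟨p, hp⟩ := hg
  obtain ⟨r, hpr⟩ := id hp
  have key : ∀ n : ℕ, (Nat.factorial n : ℂ) * p.coeff n = iteratedDeriv n g z₀ := by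
    intro n
    rw [iteratedDeriv_eq_iteratedFDeriv, ← hpr.factorial_smul 1 n, nsmul_eq_mul]
    rfl
  have hpm : p m ≠ 0 := by
    intro hc
    apply hm
    rw [← key m, FormalMultilinearSeries.coeff_eq_zero.mpr hc, mul_zero]
  have hlt : ∀ j : ℕ, j < m → p j = 0 := by
    intro j hj
    refine FormalMultilinearSeries.coeff_eq_zero.mp ?_
    have h1 := key j
    rw [h0 j hj] at h1
    have hf : (Nat.factorial j : ℂ) ≠ 0 := Nat.cast_ne_zero.mpr (Nat.factorial_ne_zero j)
    exact (mul_eq_zero.mp h1).resolve_left hf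
  have hpne : p ≠ 0 := fun h => hpm (by rw [h]; rfl)
  have horder : p.order = m := by
    refine le_antisymm (Nat.sInf_le hpm) ?_
    by_contra hcon
    push_neg at hcon
    exact FormalMultilinearSeries.apply_order_ne_zero hpne (hlt _ hcon)
  refine ⟨(Function.swap dslope z₀)^[m] g,
    ⟨_, hp.has_fpower_series_iterate_dslope_fslope m⟩, ?_, ?_⟩
  · have := hp.iterate_dslope_fslope_ne_zero hpne
    rwa [horder] at this
  · have := hp.eq_pow_order_mul_iterate_dslope
    rw [horder] at this
    exact Filter.Eventually.of_forall fun z => by simpa only [smul_eq_mul] using this z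

private lemma hillAux_le_root {X C s : ℝ} (hX : 0 ≤ X) (hC : 0 < C) {m : ℕ} (hm : m ≠ 0)
    (h : X ^ m ≤ C * s ^ 2) :
    X ≤ C ^ ((1:ℝ)/m) * |s| ^ ((2:ℝ)/m) := by
  have hm' : (m:ℝ) ≠ 0 := Nat.cast_ne_zero.mpr hm
  have hXm : X = (X ^ m) ^ ((1:ℝ)/m) := by
    rw [← Real.rpow_natCast X m, ← Real.rpow_mul hX, mul_one_div, div_self hm', Real.rpow_one]
  have h2 : (C * s ^ 2) ^ ((1:ℝ)/m) = C ^ ((1:ℝ)/m) * |s| ^ ((2:ℝ)/m) := by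
    rw [Real.mul_rpow hC.le (sq_nonneg s), ← sq_abs s, ← Real.rpow_natCast |s| 2,
      ← Real.rpow_mul (abs_nonneg s)]
    congr 1
    push_cast
    ring_nf
  rw [hXm, ← h2]
  exact Real.rpow_le_rpow (by positivity) h (by positivity)

private lemma hillAux_root_le {X C s : ℝ} (hX : 0 ≤ X) (hC : 0 < C) {m : ℕ} (hm : m ≠ 0)
    (h : C * s ^ 2 ≤ X ^ m) :
    C ^ ((1:ℝ)/m) * |s| ^ ((2:ℝ)/m) ≤ X := by
  have hm' : (m:ℝ) ≠ 0 := Nat.cast_ne_zero.mpr hm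
  have hXm : X = (X ^ m) ^ ((1:ℝ)/m) := by
    rw [← Real.rpow_natCast X m, ← Real.rpow_mul hX, mul_one_div, div_self hm', Real.rpow_one]
  have h2 : (C * s ^ 2) ^ ((1:ℝ)/m) = C ^ ((1:ℝ)/m) * |s| ^ ((2:ℝ)/m) := by
    rw [Real.mul_rpow hC.le (sq_nonneg s), ← sq_abs s, ← Real.rpow_natCast |s| 2,
      ← Real.rpow_mul (abs_nonneg s)]
    congr 1
    push_cast
    ring_nf
  rw [hXm, ← h2]
  exact Real.rpow_le_rpow (by positivity) h (by positivity)

private lemma hillAux_norm_cos {t₀ : ℝ} (ht₀ : t₀ = 0 ∨ t₀ = π) (t : ℝ) :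
    ‖(2 * (Real.cos t : ℂ) - 2 * (Real.cos t₀ : ℂ))‖ = 4 * Real.sin ((t - t₀)/2) ^ 2 := by
  have hs : Real.sin ((t - t₀)/2) ^ 2 = 1/2 - Real.cos (t - t₀)/2 := by
    have h := Real.sin_sq_eq_half_sub ((t - t₀)/2)
    rwa [show 2 * ((t - t₀)/2) = t - t₀ by ring] at h
  have key : (2 * (Real.cos t : ℂ) - 2 * (Real.cos t₀ : ℂ)) =
      ((2 * Real.cos t - 2 * Real.cos t₀ : ℝ) : ℂ) := by push_cast; ring
  rw [key, Complex.norm_real]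
  rcases ht₀ with h | h
  · subst h
    simp only [sub_zero] at hs ⊢
    rw [Real.cos_zero, Real.norm_eq_abs, abs_of_nonpos (by nlinarith [Real.cos_le_one t])]
    linarith
  · subst h
    have hcos : Real.cos (t - π) = -Real.cos t := by
      rw [Real.cos_sub]; simp
    rw [hcos] at hs
    rw [Real.cos_pi, Real.norm_eq_abs, abs_of_nonneg (by nlinarith [Real.neg_one_le_cos t])]
    linarith

/-- (Proposition 3(a), case `t₀ ∈ {0, π}`.)  Let `t₀ ∈ {0, π}`, `m ≥ 2` and let `λ₀` be an
eigenvalue of `L_{t₀}` of multiplicity `m`: `F(λ₀) = 2 cos t₀`, `F⁽ʲ⁾(λ₀) = 0` for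
`1 ≤ j ≤ m-1`, `F⁽ᵐ⁾(λ₀) ≠ 0`.  If `λ_k` is a continuous branch on an open interval
`(a,b) ∋ t₀` with `λ_k(t₀) = λ₀` and `F(λ_k(t)) = 2 cos t`, then
`λ_k(t) - λ₀ ∼ (t - t₀)^{2/m}` as `t → t₀`, and for `t` near (but distinct from) `t₀` the
eigenvalue `λ_k(t)` is simple, i.e. `F'(λ_k(t)) ≠ 0`. -/
theorem eigenvalue_branch_asymptotics_edge (H : HillContext)
    (t₀ : ℝ) (ht₀ : t₀ = 0 ∨ t₀ = π) (m : ℕ) (hm : 2 ≤ m) (lam₀ : ℂ)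
    (hF0 : H.F lam₀ = 2 * (Real.cos t₀ : ℂ))
    (hFj : ∀ j : ℕ, 1 ≤ j → j ≤ m - 1 → iteratedDeriv j H.F lam₀ = 0)
    (hFm : iteratedDeriv m H.F lam₀ ≠ 0)
    (a b : ℝ) (ha : a < t₀) (hb : t₀ < b)
    (lamk : ℝ → ℂ) (hcont : ContinuousOn lamk (Ioo a b))
    (hk0 : lamk t₀ = lam₀)
    (hFk : ∀ t ∈ Ioo a b, H.F (lamk t) = 2 * (Real.cos t : ℂ)) :
    ∃ δ c₁ c₂ : ℝ, 0 < δ ∧ 0 < c₁ ∧ 0 < c₂ ∧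
      (∀ t ∈ Ioo a b, 0 < |t - t₀| → |t - t₀| ≤ δ →
        c₁ * |t - t₀| ^ ((2 : ℝ) / (m : ℝ)) ≤ ‖lamk t - lam₀‖ ∧
        ‖lamk t - lam₀‖ ≤ c₂ * |t - t₀| ^ ((2 : ℝ) / (m : ℝ))) ∧
      ∃ δ' : ℝ, 0 < δ' ∧ δ' ≤ δ ∧
        ∀ t ∈ Ioo a b, 0 < |t - t₀| → |t - t₀| ≤ δ' → deriv H.F (lamk t) ≠ 0 := by
  classical
  have hm0 : m ≠ 0 := by omega
  set c : ℂ := 2 * (Real.cos t₀ : ℂ) with hc_def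
  set g : ℂ → ℂ := fun z => H.F z - c with hg_def
  have hFdiff : Differentiable ℂ H.F := fun z =>
    ((H.θ_entire 1 z).add (H.φd_entire 1 z))
  have hgdiff : Differentiable ℂ g := hFdiff.sub_const c
  have hitd : ∀ j : ℕ, 0 < j → iteratedDeriv j g lam₀ = iteratedDeriv j H.F lam₀ := by
    intro j hj
    have hgeq : g = fun z => (-c) + H.F z := by funext z; simp [hg_def]; ring
    rw [hgeq, ← iteratedDerivWithin_univ, ← iteratedDerivWithin_univ,
      iteratedDerivWithin_const_add hj]
  have h0 : ∀ j : ℕ, j < m → iteratedDeriv j g lam₀ = 0 := by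
    intro j hj
    rcases Nat.eq_zero_or_pos j with rfl | hj'
    · simp only [iteratedDeriv_zero, hg_def, hc_def]
      rw [hF0]; ring
    · rw [hitd j hj']; exact hFj j hj' (by omega)
  have hmg : iteratedDeriv m g lam₀ ≠ 0 := by rw [hitd m (by omega)]; exact hFm
  obtain ⟨h, hh_an, hh_ne, hh_eq⟩ := hillAux_factor (hgdiff.analyticAt lam₀) h0 hmg
  set A : ℝ := ‖h lam₀‖ / 2 with hA_def
  set B : ℝ := 2 * ‖h lam₀‖ with hB_def
  have hnormpos : 0 < ‖h lam₀‖ := norm_pos_iff.mpr hh_ne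
  have hApos : 0 < A := half_pos hnormpos
  have hBpos : 0 < B := by rw [hB_def]; linarith
  have hev : ∀ᶠ z in 𝓝 lam₀, g z = (z - lam₀) ^ m * h z ∧ ‖h z - h lam₀‖ < A := by
    refine hh_eq.and ?_
    have hca : ContinuousAt h lam₀ := hh_an.continuousAt
    have h2 := Metric.tendsto_nhds.mp hca A hApos
    simpa [dist_eq_norm] using h2
  obtain ⟨ε, hεpos, hεball⟩ := Metric.eventually_nhds_iff.mp hev
  have hbound : ∀ z : ℂ, dist z lam₀ < ε →
      A * ‖z - lam₀‖ ^ m ≤ ‖g z‖ ∧ ‖g z‖ ≤ B * ‖z - lam₀‖ ^ m := by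
    intro z hz
    obtain ⟨hgz, hhz⟩ := hεball hz
    have hlow : A ≤ ‖h z‖ := by
      have h4 : ‖h lam₀‖ - ‖h z‖ ≤ ‖h lam₀ - h z‖ := norm_sub_norm_le _ _
      rw [norm_sub_rev] at h4
      rw [hA_def] at hhz ⊢
      linarith
    have hhigh : ‖h z‖ ≤ B := by
      have h4 : ‖h z‖ - ‖h lam₀‖ ≤ ‖h z - h lam₀‖ := norm_sub_norm_le _ _
      rw [hA_def] at hhz
      rw [hB_def]
      linarith
    rw [hgz, norm_mul, norm_pow]
    have hXnn : (0:ℝ) ≤ ‖z - lam₀‖ ^ m := by positivity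
    exact ⟨by nlinarith, by nlinarith⟩
  have ht₀mem : t₀ ∈ Ioo a b := ⟨ha, hb⟩
  have hck : ContinuousAt lamk t₀ := hcont.continuousAt (isOpen_Ioo.mem_nhds ht₀mem)
  have hck' : Filter.Tendsto lamk (nhds t₀) (nhds lam₀) := by
    rw [← hk0]; exact hck
  obtain ⟨δ₀, hδ₀pos, hδ₀⟩ :=
    Metric.eventually_nhds_iff.mp (Metric.tendsto_nhds.mp hck' ε hεpos)
  set δ : ℝ := min (δ₀ / 2) π with hδ_def
  have hπ : 0 < π := Real.pi_pos
  have hδpos : 0 < δ := lt_min (by linarith) hπ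
  set c₁ : ℝ := (4 / (π ^ 2 * B)) ^ ((1:ℝ)/m) with hc₁_def
  set c₂ : ℝ := (1 / A) ^ ((1:ℝ)/m) with hc₂_def
  have hc₁pos : 0 < c₁ := Real.rpow_pos_of_pos (by positivity) _
  have hc₂pos : 0 < c₂ := Real.rpow_pos_of_pos (by positivity) _
  have main : ∀ t ∈ Ioo a b, 0 < |t - t₀| → |t - t₀| ≤ δ →
      c₁ * |t - t₀| ^ ((2:ℝ)/(m:ℝ)) ≤ ‖lamk t - lam₀‖ ∧
      ‖lamk t - lam₀‖ ≤ c₂ * |t - t₀| ^ ((2:ℝ)/(m:ℝ)) := by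
    intro t ht hts htδ
    have hdist : dist (lamk t) lam₀ < ε := by
      apply hδ₀
      rw [Real.dist_eq]
      have := le_trans htδ (min_le_left _ _)
      linarith
    obtain ⟨hlb, hub⟩ := hbound (lamk t) hdist
    have hgval : g (lamk t) = 2 * (Real.cos t : ℂ) - 2 * (Real.cos t₀ : ℂ) := by
      simp only [hg_def, hc_def]
      rw [hFk t ht]
    have hnorm : ‖g (lamk t)‖ = 4 * Real.sin ((t - t₀)/2) ^ 2 := by
      rw [hgval]; exact hillAux_norm_cos ht₀ t
    set s : ℝ := t - t₀ with hs_def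
    have hsle : |s| ≤ π := le_trans htδ (min_le_right _ _)
    have hupper : 4 * Real.sin (s/2) ^ 2 ≤ s ^ 2 := by
      have hb1 := Real.sin_sq_le_sq (x := s/2)
      nlinarith [hb1]
    have hlower : (4 / π ^ 2) * s ^ 2 ≤ 4 * Real.sin (s/2) ^ 2 := by
      have h1 : 2/π * (|s|/2) ≤ Real.sin (|s|/2) :=
        Real.mul_le_sin (by positivity) (by linarith)
      have heq : 2/π * (|s|/2) = |s|/π := by ring
      rw [heq] at h1
      have h2 : Real.sin (|s|/2) ^ 2 = Real.sin (s/2) ^ 2 := by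
        rcases abs_cases s with ⟨hc', _⟩ | ⟨hc', _⟩
        · rw [hc']
        · rw [hc', neg_div, Real.sin_neg]; ring
      have hLnn : 0 ≤ |s|/π := by positivity
      have h3 := mul_self_le_mul_self hLnn h1
      have h4 : |s|/π * (|s|/π) = s ^ 2 / π ^ 2 := by
        rw [div_mul_div_comm, abs_mul_abs_self, sq, sq]
      rw [h4] at h3
      have h5 : Real.sin (|s|/2) * Real.sin (|s|/2) = Real.sin (|s|/2) ^ 2 := (sq _).symm
      rw [h5, h2] at h3
      have hπ2 : 0 < π ^ 2 := by positivity
      rw [div_mul_eq_mul_div, div_le_iff₀ hπ2]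
      rw [div_le_iff₀ hπ2] at h3
      linarith
    set X : ℝ := ‖lamk t - lam₀‖ with hX_def
    have hXnn : 0 ≤ X := norm_nonneg _
    rw [hnorm] at hlb hub
    have e1 : X ^ m ≤ (1/A) * s ^ 2 := by
      have h6 : A * X ^ m ≤ s ^ 2 := le_trans hlb hupper
      rw [one_div_mul_eq_div, le_div_iff₀ hApos]
      linarith [h6]
    have e2 : (4 / (π ^ 2 * B)) * s ^ 2 ≤ X ^ m := by
      have h6 : (4 / π ^ 2) * s ^ 2 ≤ B * X ^ m := le_trans hlower hub
      have h7 : 4 / (π ^ 2 * B) * s ^ 2 = ((4 / π ^ 2) * s ^ 2) / B := by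
        field_simp
      rw [h7, div_le_iff₀ hBpos]
      linarith [h6]
    exact ⟨hillAux_root_le hXnn (by positivity) hm0 e2,
      hillAux_le_root hXnn (by positivity) hm0 e1⟩
  have hdg_an : AnalyticAt ℂ (deriv g) lam₀ := by
    have h1 : AnalyticOnNhd ℂ g Set.univ := fun z _ => hgdiff.analyticAt z
    exact h1.deriv lam₀ (Set.mem_univ _)
  have hne : ∀ᶠ z in nhdsWithin lam₀ {lam₀}ᶜ, deriv g z ≠ 0 := by
    rcases hdg_an.eventually_eq_zero_or_eventually_ne_zero with hz | hz
    · exfalso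
      apply hmg
      have hm1 : m = (m - 1) + 1 := by omega
      rw [hm1, iteratedDeriv_succ']
      have hEq : deriv g =ᶠ[nhds lam₀] (fun _ => (0:ℂ)) := hz
      rw [hEq.iteratedDeriv_eq (m-1)]
      exact hillAux_itd_zero _ _
    · exact hz
  have hne' : ∀ᶠ z in nhds lam₀, z ∈ ({lam₀}ᶜ : Set ℂ) → deriv g z ≠ 0 := by
    rwa [eventually_nhdsWithin_iff] at hne
  obtain ⟨ε', hε'pos, hε'⟩ := Metric.eventually_nhds_iff.mp hne'
  obtain ⟨δ₁, hδ₁pos, hδ₁⟩ :=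
    Metric.eventually_nhds_iff.mp (Metric.tendsto_nhds.mp hck' ε' hε'pos)
  refine ⟨δ, c₁, c₂, hδpos, hc₁pos, hc₂pos, main, min δ (δ₁/2),
    lt_min hδpos (by linarith), min_le_left _ _, ?_⟩
  intro t ht hts htδ'
  have htδ : |t - t₀| ≤ δ := le_trans htδ' (min_le_left _ _)
  have hne0 : lamk t ≠ lam₀ := by
    have hlow := (main t ht hts htδ).1
    have hp1 : 0 < c₁ * |t - t₀| ^ ((2:ℝ)/(m:ℝ)) :=
      mul_pos hc₁pos (Real.rpow_pos_of_pos hts _)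
    intro hcon
    rw [hcon, sub_self, norm_zero] at hlow
    linarith
  have hdist' : dist (lamk t) lam₀ < ε' := by
    apply hδ₁
    rw [Real.dist_eq]
    have := le_trans htδ' (min_le_right _ _)
    linarith
  have hder := hε' hdist' hne0
  have hderiv_eq : deriv g (lamk t) = deriv H.F (lamk t) := by
    simp only [hg_def]
    exact deriv_sub_const c
  rw [← hderiv_eq]
  exact hder


end
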